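/- The partial order of convex piecewise linear functions on the rational interval (0,1) with finitely many rational breakpoints, ordered pointwise, is universal: every countable partial order embeds into it. -/

import Mathlib

set_option linter.unnecessarySimpa false
set_option linter.unnecessarySeqFocus false

namespace PWLU


abbrev Str := List Bool

noncomputable section

/-- level width -/
def W (k : ℕ) : ℚ := (1/4 : ℚ)^k

/-- base scale -/
def B : ℕ → ℚ
  | 0 => 1
  | k+1 => B k * (1/16 : ℚ)^k / 1024

def C (k : ℕ) : ℚ := 4 * (4:ℚ)^k * B k

lemma W_pos (k : ℕ) : 0 < W k := by
  unfold W; positivity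

lemma B_pos : ∀ k, 0 < B k
  | 0 => by norm_num [B]
  | k+1 => by
      have := B_pos k
      unfold B; positivity

lemma C_pos (k : ℕ) : 0 < C k := by
  have := B_pos k; unfold C; positivity

lemma B_succ (k : ℕ) : B (k+1) = B k * (1/16 : ℚ)^k / 1024 := rfl

lemma C_succ_eq (k : ℕ) : C (k+1) = B k * W k / 64 := by
  have hp : ((4:ℚ))^k * (1/16:ℚ)^k = (1/4:ℚ)^k := by
    rw [← mul_pow]; norm_num
  unfold C W
  rw [B_succ]
  have h4 : ((4:ℚ))^(k+1) = 4 * 4^k := by ring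
  rw [h4]
  calc 4 * (4 * 4^k) * (B k * (1/16:ℚ)^k / 1024)
      = B k * ((4:ℚ)^k * (1/16:ℚ)^k) / 64 := by ring
    _ = B k * (1/4:ℚ)^k / 64 := by rw [hp]

lemma C_succ_le (k : ℕ) : C (k+1) ≤ C k / 256 := by
  rw [C_succ_eq]
  unfold C W
  have h1 : ((1:ℚ)/4)^k ≤ 1 := by
    apply pow_le_one₀ <;> norm_num
  have hB := B_pos k
  have h2 : (0:ℚ) < (4:ℚ)^k := by positivity
  have h3 : (1:ℚ) ≤ (4:ℚ)^k := one_le_pow₀ (by norm_num)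
  rw [div_le_div_iff₀ (by norm_num) (by norm_num)]
  calc B k * (1/4:ℚ)^k * 256 ≤ B k * 1 * 256 := by nlinarith
    _ ≤ 4 * 4^k * B k * 64 := by nlinarith

def uInc (k : ℕ) (b : Bool) : ℚ := if b then 2 * B k else B k

def sOf (k : ℕ) (l : ℚ) : ℚ := B k * (l + W k / 2) / (1 - (l + W k / 2))

def wInc (k : ℕ) (l : ℚ) (b : Bool) : ℚ := if b then B k else sOf k l + B k

def lStep (k : ℕ) (l : ℚ) (b : Bool) : ℚ := if b then l else l + 3/4 * W k

def uA : Str → ℕ → ℚ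
  | [], _ => 0
  | b :: r, k => uInc k b + uA r (k+1)

def wA : Str → ℕ → ℚ → ℚ
  | [], _, _ => 0
  | b :: r, k, l => wInc k l b + wA r (k+1) (lStep k l b)

def loF : Str → ℕ → ℚ → ℚ
  | [], _, l => l
  | b :: r, k, l => loF r (k+1) (lStep k l b)

/-- validity of a (level, left endpoint) state -/
def Ok (k : ℕ) (l : ℚ) : Prop := 0 ≤ l ∧ l + W k ≤ 1

lemma Ok_zero : Ok 0 0 := by constructor <;> norm_num [W]

lemma W_succ (k : ℕ) : W (k+1) = W k / 4 := by
  unfold W; rw [pow_succ]; ring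

lemma Ok_step (k : ℕ) (l : ℚ) (b : Bool) (h : Ok k l) : Ok (k+1) (lStep k l b) := by
  obtain ⟨h0, h1⟩ := h
  have hw := W_pos k
  cases b <;> simp [lStep, Ok, W_succ] <;> constructor <;> nlinarith

-- midpoint bounds
lemma m_bounds (k : ℕ) (l : ℚ) (h : Ok k l) :
    W k / 2 ≤ l + W k / 2 ∧ l + W k / 2 ≤ 1 - W k / 2 := by
  obtain ⟨h0, h1⟩ := h
  constructor <;> nlinarith [W_pos k]

lemma sOf_pos (k : ℕ) (l : ℚ) (h : Ok k l) : 0 < sOf k l := by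
  obtain ⟨hm1, hm2⟩ := m_bounds k l h
  have hw := W_pos k
  have hden : 0 < 1 - (l + W k / 2) := by nlinarith
  have hnum : 0 < B k * (l + W k / 2) := by
    have := B_pos k; nlinarith
  exact div_pos hnum hden

lemma sOf_key (k : ℕ) (l : ℚ) (h : Ok k l) :
    (1 - (l + W k / 2)) * sOf k l = B k * (l + W k / 2) := by
  obtain ⟨hm1, hm2⟩ := m_bounds k l h
  have hw := W_pos k
  have hden : (1 - (l + W k / 2)) ≠ 0 := by nlinarith
  unfold sOf
  rw [mul_comm, div_mul_cancel₀ _ hden]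

lemma sOf_le (k : ℕ) (l : ℚ) (h : Ok k l) : sOf k l ≤ 2 * (4:ℚ)^k * B k := by
  obtain ⟨hm1, hm2⟩ := m_bounds k l h
  have hw := W_pos k
  have hB := B_pos k
  have hden : 0 < 1 - (l + W k / 2) := by nlinarith
  have hkey := sOf_key k l h
  have hW4 : W k * (4:ℚ)^k = 1 := by
    unfold W; rw [← mul_pow]; norm_num
  have h2 : W k / 2 ≤ 1 - (l + W k / 2) := by nlinarith
  -- sOf ≤ B * m / (W/2) ≤ B * 1 * 2/W = 2 * 4^k * B
  have hm01 : l + W k / 2 ≤ 1 := by nlinarith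
  have hs := sOf_pos k l h
  have : sOf k l * (W k / 2) ≤ B k * 1 := by
    calc sOf k l * (W k / 2) ≤ sOf k l * (1 - (l + W k / 2)) := by nlinarith
      _ = B k * (l + W k / 2) := by rw [mul_comm]; exact hkey
      _ ≤ B k * 1 := by nlinarith
  have h3 := mul_le_mul_of_nonneg_right this (show (0:ℚ) ≤ 2*(4:ℚ)^k by positivity)
  calc sOf k l = sOf k l * (W k * (4:ℚ)^k) := by rw [hW4]; ring
    _ = sOf k l * (W k / 2) * (2*(4:ℚ)^k) := by ring
    _ ≤ B k * 1 * (2*(4:ℚ)^k) := h3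
    _ = 2 * (4:ℚ)^k * B k := by ring

-- increment bounds
lemma uInc_pos (k : ℕ) (b : Bool) : 0 < uInc k b := by
  have := B_pos k; cases b <;> simp [uInc] <;> linarith

lemma uInc_le (k : ℕ) (b : Bool) : uInc k b ≤ C k := by
  have hB := B_pos k
  have h1 : (1:ℚ) ≤ (4:ℚ)^k := one_le_pow₀ (by norm_num)
  cases b <;> simp [uInc, C] <;> nlinarith

lemma wInc_pos (k : ℕ) (l : ℚ) (b : Bool) (h : Ok k l) : 0 < wInc k l b := by
  have := B_pos k; have := sOf_pos k l h
  cases b <;> simp [wInc] <;> linarith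

lemma wInc_le (k : ℕ) (l : ℚ) (b : Bool) (h : Ok k l) : wInc k l b ≤ C k := by
  have hB := B_pos k
  have h1 : (1:ℚ) ≤ (4:ℚ)^k := one_le_pow₀ (by norm_num)
  have hs := sOf_le k l h
  cases b <;> simp [wInc, C] <;> nlinarith

-- append lemmas
lemma uA_append (x y : Str) : ∀ k, uA (x ++ y) k = uA x k + uA y (k + x.length) := by
  induction x with
  | nil => intro k; simp [uA]
  | cons b r ih =>
      intro k
      show uInc k b + uA (r ++ y) (k+1) = uInc k b + uA r (k+1) + uA y (k + (r.length + 1))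
      rw [ih (k+1), show k + (r.length + 1) = k + 1 + r.length by omega]
      ring

lemma wA_append (x y : Str) : ∀ k l, wA (x ++ y) k l = wA x k l + wA y (k + x.length) (loF x k l) := by
  induction x with
  | nil => intro k l; simp [wA, loF]
  | cons b r ih =>
      intro k l
      show wInc k l b + wA (r ++ y) (k+1) (lStep k l b)
          = wInc k l b + wA r (k+1) (lStep k l b) + wA y (k + (r.length + 1)) (loF r (k+1) (lStep k l b))
      rw [ih (k+1), show k + (r.length + 1) = k + 1 + r.length by omega]
      ring

lemma loF_append (x y : Str) : ∀ k l, loF (x ++ y) k l = loF y (k + x.length) (loF x k l) := by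
  induction x with
  | nil => intro k l; simp [loF]
  | cons b r ih =>
      intro k l
      show loF (r ++ y) (k+1) (lStep k l b) = loF y (k + (r.length + 1)) (loF r (k+1) (lStep k l b))
      rw [ih (k+1), show k + (r.length + 1) = k + 1 + r.length by omega]

-- nesting of loF
lemma loF_nest (μ : Str) : ∀ k l, Ok k l →
    l ≤ loF μ k l ∧ loF μ k l + W (k + μ.length) ≤ l + W k := by
  induction μ with
  | nil => intro k l _; simp [loF]
  | cons b r ih =>
      intro k l h
      have hstep := Ok_step k l b h
      obtain ⟨ih1, ih2⟩ := ih (k+1) (lStep k l b) hstep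
      have hw := W_pos k
      constructor
      · calc l ≤ lStep k l b := by cases b <;> simp [lStep] <;> nlinarith
          _ ≤ loF r (k+1) (lStep k l b) := ih1
          _ = loF (b :: r) k l := by simp [loF]
      · have : loF (b :: r) k l + W (k + (b :: r).length)
            = loF r (k+1) (lStep k l b) + W ((k+1) + r.length) := by
          simp [loF, List.length_cons]
          rw [show k + (r.length + 1) = k + 1 + r.length by omega]
        rw [this]
        calc loF r (k+1) (lStep k l b) + W (k+1+r.length) ≤ lStep k l b + W (k+1) := ih2
          _ ≤ l + W k := by cases b <;> simp [lStep, W_succ] <;> nlinarith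

lemma Ok_loF (μ : Str) (k : ℕ) (l : ℚ) (h : Ok k l) : Ok (k + μ.length) (loF μ k l) := by
  obtain ⟨h1, h2⟩ := loF_nest μ k l h
  exact ⟨le_trans h.1 h1, le_trans h2 (le_trans h.2 le_rfl)⟩

-- tail bounds
lemma uA_nonneg (μ : Str) : ∀ k, 0 ≤ uA μ k := by
  induction μ with
  | nil => intro k; simp [uA]
  | cons b r ih => intro k; have := uInc_pos k b; have := ih (k+1); simp only [uA]; linarith

lemma wA_nonneg (μ : Str) : ∀ k l, Ok k l → 0 ≤ wA μ k l := by
  induction μ with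
  | nil => intro k l _; simp [wA]
  | cons b r ih =>
      intro k l h
      have := wInc_pos k l b h
      have := ih (k+1) (lStep k l b) (Ok_step k l b h)
      simp only [wA]; linarith

lemma C_nonneg (k : ℕ) : 0 ≤ C k := le_of_lt (C_pos k)

lemma uA_le (μ : Str) : ∀ k, uA μ k ≤ 2 * C k := by
  induction μ with
  | nil => intro k; have := C_pos k; simp [uA]; linarith
  | cons b r ih =>
      intro k
      have h1 := uInc_le k b
      have h2 := ih (k+1)
      have h3 := C_succ_le k
      have h4 := C_pos k
      simp only [uA]; linarith

lemma wA_le (μ : Str) : ∀ k l, Ok k l → wA μ k l ≤ 2 * C k := by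
  induction μ with
  | nil => intro k l _; have := C_pos k; simp [wA]; linarith
  | cons b r ih =>
      intro k l h
      have h1 := wInc_le k l b h
      have h2 := ih (k+1) (lStep k l b) (Ok_step k l b h)
      have h3 := C_succ_le k
      have h4 := C_pos k
      simp only [wA]; linarith

-- main objects
def uu (σ : Str) : ℚ := uA σ 0
def ww (σ : Str) : ℚ := wA σ 0 0
def theta (σ : Str) : ℚ := loF σ 0 0 + W σ.length / 2
def tpt (σ : Str) : ℚ := 1 - theta σ
def L (σ : Str) (t : ℚ) : ℚ := -((1 - t) * uu σ + t * ww σ)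

lemma theta_mem (σ : Str) : 0 < theta σ ∧ theta σ < 1 := by
  have h := loF_nest σ 0 0 Ok_zero
  have hw := W_pos σ.length
  have hW0 : W 0 = 1 := by norm_num [W]
  constructor
  · unfold theta; nlinarith [h.1]
  · unfold theta
    have := h.2
    rw [Nat.zero_add, hW0] at this
    nlinarith

lemma tpt_mem (σ : Str) : tpt σ ∈ Set.Ioo (0:ℚ) 1 := by
  have := theta_mem σ
  constructor <;> (unfold tpt; simp) <;> [exact this.2; exact this.1]

-- prefix monotonicity
lemma uu_mono {τ σ : Str} (h : τ <+: σ) : uu τ ≤ uu σ := by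
  obtain ⟨μ, rfl⟩ := h
  unfold uu
  rw [uA_append]
  have := uA_nonneg μ (0 + τ.length)
  linarith

lemma ww_mono {τ σ : Str} (h : τ <+: σ) : ww τ ≤ ww σ := by
  obtain ⟨μ, rfl⟩ := h
  unfold ww
  rw [wA_append]
  have := wA_nonneg μ (0 + τ.length) (loF τ 0 0) (by simpa using Ok_loF τ 0 0 Ok_zero)
  linarith

lemma L_mono {τ σ : Str} (h : τ <+: σ) {t : ℚ} (ht : t ∈ Set.Icc (0:ℚ) 1) :
    L σ t ≤ L τ t := by
  obtain ⟨ht0, ht1⟩ := ht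
  have h1 := uu_mono h
  have h2 := ww_mono h
  unfold L
  nlinarith

-- divergence decomposition
lemma diverge : ∀ (σ τ : Str), ¬ τ <+: σ → ¬ σ <+: τ →
    ∃ ρ b σ' τ', σ = ρ ++ b :: σ' ∧ τ = ρ ++ (!b) :: τ' := by
  intro σ
  induction σ with
  | nil => intro τ _ h2; exact absurd (List.nil_prefix) h2
  | cons a σ₀ ih =>
      intro τ h1 h2
      cases τ with
      | nil => exact absurd (List.nil_prefix) h1
      | cons c τ₀ =>
          by_cases hac : a = c
          · subst hac
            have h1' : ¬ τ₀ <+: σ₀ := fun hp => h1 (List.cons_prefix_cons.mpr ⟨rfl, hp⟩)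
            have h2' : ¬ σ₀ <+: τ₀ := fun hp => h2 (List.cons_prefix_cons.mpr ⟨rfl, hp⟩)
            obtain ⟨ρ, b, σ', τ', hσ, hτ⟩ := ih τ₀ h1' h2'
            exact ⟨a :: ρ, b, σ', τ', by simp [hσ], by simp [hτ]⟩
          · refine ⟨[], a, σ₀, τ₀, by simp, ?_⟩
            have : c = !a := by
              cases a <;> cases c <;> simp_all
            simp [this]

lemma uA_pos (b : Bool) (r : Str) (k : ℕ) : 0 < uA (b :: r) k := by
  have := uInc_pos k b
  have := uA_nonneg r (k+1)
  simp only [uA]; linarith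

lemma wA_pos (b : Bool) (r : Str) (k : ℕ) (l : ℚ) (h : Ok k l) : 0 < wA (b :: r) k l := by
  have := wInc_pos k l b h
  have := wA_nonneg r (k+1) (lStep k l b) (Ok_step k l b h)
  simp only [wA]; linarith

lemma uInc_true (k : ℕ) : uInc k true = 2 * B k := by simp [uInc]
lemma uInc_false (k : ℕ) : uInc k false = B k := by simp [uInc]
lemma wInc_true (k : ℕ) (l : ℚ) : wInc k l true = B k := by simp [wInc]
lemma wInc_false (k : ℕ) (l : ℚ) : wInc k l false = sOf k l + B k := by simp [wInc]
lemma lStep_true (k : ℕ) (l : ℚ) : lStep k l true = l := by simp [lStep]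
lemma lStep_false (k : ℕ) (l : ℚ) : lStep k l false = l + 3/4 * W k := by simp [lStep]

/-- pure algebra for the "false side" case -/
lemma key_alg_false (Bk Wk s θ m A A' Q Q' Cs : ℚ)
    (hB : 0 < Bk) (hW : 0 < Wk) (hs : 0 < s) (hθ0 : 0 < θ) (hθ1 : θ < 1)
    (hskey : (1 - m) * s = Bk * m)
    (hθm : m + Wk/4 < θ)
    (hA : A ≤ 2*Cs) (hA0 : 0 ≤ A) (hA'0 : 0 ≤ A')
    (hQ : Q ≤ 2*Cs) (hQ0 : 0 ≤ Q) (hQ'0 : 0 ≤ Q')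
    (hCs : Cs = Bk*Wk/64) :
    0 < θ * (Bk + (A' - A)) + (1 - θ) * (-s + (Q' - Q)) := by
  have e1 : (1-θ)*s ≤ Bk*m := by
    have h5 : (1-θ) ≤ (1-m) := by linarith
    nlinarith [mul_le_mul_of_nonneg_right h5 hs.le]
  have e2 : Bk*m + Bk*Wk/4 < θ*Bk := by
    have := mul_lt_mul_of_pos_right hθm hB
    nlinarith [this]
  have e3 : 0 ≤ θ*A' := mul_nonneg hθ0.le hA'0
  have e4 : θ*A ≤ A := mul_le_of_le_one_left hA0 hθ1.le
  have e5 : 0 ≤ (1-θ)*Q' := mul_nonneg (by linarith) hQ'0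
  have e6 : (1-θ)*Q ≤ Q := mul_le_of_le_one_left hQ0 (by linarith)
  have expand : θ * (Bk + (A' - A)) + (1 - θ) * (-s + (Q' - Q))
      = θ*Bk + θ*A' - θ*A - (1-θ)*s + (1-θ)*Q' - (1-θ)*Q := by ring
  rw [expand]
  linarith

/-- pure algebra for the "true side" case -/
lemma key_alg_true (Bk Wk s θ m A A' Q Q' Cs : ℚ)
    (hB : 0 < Bk) (hW : 0 < Wk) (hs : 0 < s) (hθ0 : 0 < θ) (hθ1 : θ < 1)
    (hskey : (1 - m) * s = Bk * m)
    (hθm : θ < m - Wk/4)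
    (hA : A ≤ 2*Cs) (hA0 : 0 ≤ A) (hA'0 : 0 ≤ A')
    (hQ : Q ≤ 2*Cs) (hQ0 : 0 ≤ Q) (hQ'0 : 0 ≤ Q')
    (hCs : Cs = Bk*Wk/64) :
    0 < θ * (-Bk + (A' - A)) + (1 - θ) * (s + (Q' - Q)) := by
  have e1 : Bk*m ≤ (1-θ)*s := by
    have h5 : (1-m) ≤ (1-θ) := by linarith
    nlinarith [mul_le_mul_of_nonneg_right h5 hs.le]
  have e2 : θ*Bk < Bk*m - Bk*Wk/4 := by
    have := mul_lt_mul_of_pos_right hθm hB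
    nlinarith [this]
  have e3 : 0 ≤ θ*A' := mul_nonneg hθ0.le hA'0
  have e4 : θ*A ≤ A := mul_le_of_le_one_left hA0 hθ1.le
  have e5 : 0 ≤ (1-θ)*Q' := mul_nonneg (by linarith) hQ'0
  have e6 : (1-θ)*Q ≤ Q := mul_le_of_le_one_left hQ0 (by linarith)
  have expand : θ * (-Bk + (A' - A)) + (1 - θ) * (s + (Q' - Q))
      = -(θ*Bk) + θ*A' - θ*A + (1-θ)*s + (1-θ)*Q' - (1-θ)*Q := by ring
  rw [expand]
  linarith

/-- The key inequality: if `τ` is not a prefix of `σ`, then at `σ`'s witness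
parameter, the combination is positive. -/
theorem keyB (σ τ : Str) (h : ¬ τ <+: σ) :
    0 < theta σ * (uu τ - uu σ) + (1 - theta σ) * (ww τ - ww σ) := by
  obtain ⟨hθ0, hθ1⟩ := theta_mem σ
  by_cases hst : σ <+: τ
  · -- τ strictly extends σ
    obtain ⟨μ, rfl⟩ := hst
    cases μ with
    | nil => exact absurd (by simp) h
    | cons b r =>
        have hOk : Ok (0 + σ.length) (loF σ 0 0) := Ok_loF σ 0 0 Ok_zero
        have h1 : uu (σ ++ b :: r) - uu σ = uA (b :: r) (0 + σ.length) := by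
          unfold uu; rw [uA_append]; ring
        have h2 : ww (σ ++ b :: r) - ww σ = wA (b :: r) (0 + σ.length) (loF σ 0 0) := by
          unfold ww; rw [wA_append]; ring
        rw [h1, h2]
        have := uA_pos b r (0 + σ.length)
        have := wA_pos b r (0 + σ.length) (loF σ 0 0) hOk
        nlinarith
  · -- divergence
    obtain ⟨ρ, b, σ', τ', hσ, hτ⟩ := diverge σ τ h hst
    have hOk : Ok ρ.length (loF ρ 0 0) := by
      have := Ok_loF ρ 0 0 Ok_zero
      simpa using this
    have hOkb : Ok (ρ.length+1) (lStep ρ.length (loF ρ 0 0) b) := Ok_step _ _ b hOk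
    have hOknb : Ok (ρ.length+1) (lStep ρ.length (loF ρ 0 0) (!b)) := Ok_step _ _ (!b) hOk
    -- coordinates
    have huσ : uu σ = uA ρ 0 + uInc ρ.length b + uA σ' (ρ.length+1) := by
      rw [hσ]; unfold uu; rw [uA_append]
      simp only [uA, Nat.zero_add]; ring
    have huτ : uu τ = uA ρ 0 + uInc ρ.length (!b) + uA τ' (ρ.length+1) := by
      rw [hτ]; unfold uu; rw [uA_append]
      simp only [uA, Nat.zero_add]; ring
    have hwσ : ww σ = wA ρ 0 0 + wInc ρ.length (loF ρ 0 0) b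
        + wA σ' (ρ.length+1) (lStep ρ.length (loF ρ 0 0) b) := by
      rw [hσ]; unfold ww; rw [wA_append]
      simp only [wA, Nat.zero_add]; ring
    have hwτ : ww τ = wA ρ 0 0 + wInc ρ.length (loF ρ 0 0) (!b)
        + wA τ' (ρ.length+1) (lStep ρ.length (loF ρ 0 0) (!b)) := by
      rw [hτ]; unfold ww; rw [wA_append]
      simp only [wA, Nat.zero_add]; ring
    -- theta position
    have hloσ : loF σ 0 0 = loF σ' (ρ.length+1) (lStep ρ.length (loF ρ 0 0) b) := by
      rw [hσ, loF_append]
      simp only [loF, Nat.zero_add]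
    have hlen : σ.length = ρ.length + 1 + σ'.length := by
      rw [hσ]; simp; omega
    have hnest := loF_nest σ' (ρ.length+1) (lStep ρ.length (loF ρ 0 0) b) hOkb
    have hθlow : lStep ρ.length (loF ρ 0 0) b < theta σ := by
      unfold theta; rw [hloσ]
      nlinarith [hnest.1, W_pos σ.length]
    have hθhigh : theta σ < lStep ρ.length (loF ρ 0 0) b + W (ρ.length+1) := by
      unfold theta; rw [hloσ, hlen]
      nlinarith [hnest.2, W_pos (ρ.length + 1 + σ'.length)]
    -- tail bounds
    have hquB := uA_le σ' (ρ.length+1)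
    have hqu0 := uA_nonneg σ' (ρ.length+1)
    have hqwB := wA_le σ' (ρ.length+1) (lStep ρ.length (loF ρ 0 0) b) hOkb
    have hqw0 := wA_nonneg σ' (ρ.length+1) (lStep ρ.length (loF ρ 0 0) b) hOkb
    have hpu0 := uA_nonneg τ' (ρ.length+1)
    have hpw0 := wA_nonneg τ' (ρ.length+1) (lStep ρ.length (loF ρ 0 0) (!b)) hOknb
    have hCsucc : C (ρ.length+1) = B ρ.length * W ρ.length / 64 := C_succ_eq ρ.length
    have hB := B_pos ρ.length
    have hW := W_pos ρ.length
    have hs := sOf_pos ρ.length (loF ρ 0 0) hOk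
    have hskey := sOf_key ρ.length (loF ρ 0 0) hOk
    cases b
    · -- b = false
      simp only [Bool.not_false] at huτ hwτ hpw0 hOknb
      have hθm : (loF ρ 0 0 + W ρ.length / 2) + W ρ.length / 4 < theta σ := by
        rw [lStep_false] at hθlow; linarith
      have hDu : uu τ - uu σ
          = B ρ.length + (uA τ' (ρ.length+1) - uA σ' (ρ.length+1)) := by
        rw [huσ, huτ, uInc_true, uInc_false]; ring
      have hDw : ww τ - ww σ
          = - sOf ρ.length (loF ρ 0 0)
            + (wA τ' (ρ.length+1) (lStep ρ.length (loF ρ 0 0) true)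
               - wA σ' (ρ.length+1) (lStep ρ.length (loF ρ 0 0) false)) := by
        rw [hwσ, hwτ, wInc_true, wInc_false]; ring
      rw [hDu, hDw]
      exact key_alg_false (B ρ.length) (W ρ.length) (sOf ρ.length (loF ρ 0 0)) (theta σ)
        (loF ρ 0 0 + W ρ.length / 2) _ _ _ _ (C (ρ.length+1))
        hB hW hs hθ0 hθ1 hskey hθm hquB hqu0 hpu0 hqwB hqw0 hpw0 hCsucc
    · -- b = true
      simp only [Bool.not_true] at huτ hwτ hpw0 hOknb
      have hθm : theta σ < (loF ρ 0 0 + W ρ.length / 2) - W ρ.length / 4 := by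
        rw [lStep_true, W_succ] at hθhigh; linarith
      have hDu : uu τ - uu σ
          = - B ρ.length + (uA τ' (ρ.length+1) - uA σ' (ρ.length+1)) := by
        rw [huσ, huτ, uInc_true, uInc_false]; ring
      have hDw : ww τ - ww σ
          = sOf ρ.length (loF ρ 0 0)
            + (wA τ' (ρ.length+1) (lStep ρ.length (loF ρ 0 0) false)
               - wA σ' (ρ.length+1) (lStep ρ.length (loF ρ 0 0) true)) := by
        rw [hwσ, hwτ, wInc_true, wInc_false]; ring
      rw [hDu, hDw]
      exact key_alg_true (B ρ.length) (W ρ.length) (sOf ρ.length (loF ρ 0 0)) (theta σ)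
        (loF ρ 0 0 + W ρ.length / 2) _ _ _ _ (C (ρ.length+1))
        hB hW hs hθ0 hθ1 hskey hθm hquB hqu0 hpu0 hqwB hqw0 hpw0 hCsucc

/-- strict comparison at the witness point -/
theorem L_strict (σ τ : Str) (h : ¬ τ <+: σ) : L τ (tpt σ) < L σ (tpt σ) := by
  have hk := keyB σ τ h
  unfold L tpt
  nlinarith [hk]

-- ==================== The max-of-lines function ====================

def slope (σ : Str) : ℚ := uu σ - ww σ
def icept (σ : Str) : ℚ := - uu σ

lemma L_eq (σ : Str) (t : ℚ) : L σ t = slope σ * t + icept σ := by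
  unfold L slope icept; ring

def Phi (S : Finset Str) (t : ℚ) : ℚ :=
  if h : S.Nonempty then S.sup' h (fun σ => L σ t) else 0

lemma Phi_eq {S : Finset Str} (h : S.Nonempty) (t : ℚ) :
    Phi S t = S.sup' h (fun σ => L σ t) := by
  unfold Phi; rw [dif_pos h]

/-- the Smyth-type preorder on finite sets of strings -/
def Smy (S T : Finset Str) : Prop := ∀ σ ∈ S, ∃ τ ∈ T, τ <+: σ

lemma Smy_refl (S : Finset Str) : Smy S S := fun σ hσ => ⟨σ, hσ, List.prefix_refl σ⟩

lemma Phi_mono {S T : Finset Str} (hS : S.Nonempty) (hT : T.Nonempty)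
    (h : Smy S T) {t : ℚ} (ht : t ∈ Set.Ioo (0:ℚ) 1) : Phi S t ≤ Phi T t := by
  rw [Phi_eq hS, Phi_eq hT]
  apply Finset.sup'_le
  intro σ hσ
  obtain ⟨τ, hτT, hpre⟩ := h σ hσ
  calc L σ t ≤ L τ t := L_mono hpre ⟨le_of_lt ht.1, le_of_lt ht.2⟩
    _ ≤ T.sup' hT (fun σ => L σ t) := Finset.le_sup' (fun σ => L σ t) hτT

lemma Phi_strict {S T : Finset Str} (hS : S.Nonempty) (hT : T.Nonempty)
    (h : ¬ Smy S T) : ∃ t ∈ Set.Ioo (0:ℚ) 1, Phi T t < Phi S t := by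
  unfold Smy at h
  push_neg at h
  obtain ⟨σ, hσS, hw⟩ := h
  refine ⟨tpt σ, tpt_mem σ, ?_⟩
  rw [Phi_eq hS, Phi_eq hT]
  have h1 : T.sup' hT (fun τ => L τ (tpt σ)) < L σ (tpt σ) := by
    rw [Finset.sup'_lt_iff]
    intro τ hτ
    exact L_strict σ τ (hw τ hτ)
  exact lt_of_lt_of_le h1 (Finset.le_sup' (fun τ => L τ (tpt σ)) hσS)

-- convexity
lemma convexOn_L (σ : Str) : ConvexOn ℚ (Set.Ioo (0:ℚ) 1) (L σ) := by
  refine ⟨convex_Ioo _ _, ?_⟩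
  intro x _ y _ a b _ _ hab
  have : L σ (a • x + b • y) = a • L σ x + b • L σ y := by
    simp only [smul_eq_mul, L_eq]
    have : b = 1 - a := by linarith
    rw [this]; ring
  exact le_of_eq this

lemma convexOn_sup' (S : Finset Str) (h : S.Nonempty) :
    ConvexOn ℚ (Set.Ioo (0:ℚ) 1) (fun t => S.sup' h (fun σ => L σ t)) := by
  induction h using Finset.Nonempty.cons_induction with
  | singleton a => simpa using convexOn_L a
  | cons a s ha hs ih =>
      have heq : (fun t => (Finset.cons a s ha).sup' (Finset.cons_nonempty ha) (fun σ => L σ t))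
          = (L a) ⊔ (fun t => s.sup' hs (fun σ => L σ t)) := by
        funext t
        rw [Finset.sup'_cons hs]
        rfl
      rw [heq]
      exact (convexOn_L a).sup ih

lemma convexOn_Phi {S : Finset Str} (h : S.Nonempty) :
    ConvexOn ℚ (Set.Ioo (0:ℚ) 1) (Phi S) := by
  have : Phi S = fun t => S.sup' h (fun σ => L σ t) := by
    funext t; exact Phi_eq h t
  rw [this]
  exact convexOn_sup' S h

-- piecewise linearity
def cross (p : Str × Str) : ℚ :=
  if slope p.1 = slope p.2 then 0 else (icept p.2 - icept p.1) / (slope p.1 - slope p.2)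

lemma isPWL_Phi {S : Finset Str} (hS : S.Nonempty) :
    ∃ s : Finset ℚ, ∀ a b : ℚ, 0 ≤ a → b ≤ 1 → a < b →
      (∀ c ∈ s, ¬ (a < c ∧ c < b)) →
      ∃ m q : ℚ, ∀ x : ℚ, a < x → x < b → Phi S x = m * x + q := by
  classical
  refine ⟨(S ×ˢ S).image cross, ?_⟩
  intro a b _ _ hab havoid
  set c := (a+b)/2 with hc
  have hca : a < c := by rw [hc]; linarith
  have hcb : c < b := by rw [hc]; linarith
  obtain ⟨σstar, hσstar, hmax⟩ := Finset.exists_mem_eq_sup' hS (fun σ => L σ c)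
  refine ⟨slope σstar, icept σstar, ?_⟩
  intro x hax hxb
  have key : ∀ σ ∈ S, L σ x ≤ L σstar x := by
    intro σ hσ
    by_contra hlt
    push_neg at hlt
    have hcge : L σ c ≤ L σstar c := by
      have h2 := Finset.le_sup' (fun σ => L σ c) hσ
      rw [hmax] at h2
      exact h2
    -- linear difference d t = α t + β
    set α := slope σstar - slope σ with hα
    set β := icept σstar - icept σ with hβ
    have hd : ∀ t, L σstar t - L σ t = α * t + β := by
      intro t; rw [L_eq, L_eq, hα, hβ]; ring
    have hdc : 0 ≤ α * c + β := by rw [← hd]; linarith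
    have hdx : α * x + β < 0 := by rw [← hd]; linarith
    have hαne : α ≠ 0 := by
      intro h0
      rw [h0] at hdc hdx
      simp at hdc hdx
      linarith
    have hslopene : slope σstar ≠ slope σ := by
      intro h0; apply hαne; rw [hα, h0]; ring
    set t₀ := -β / α with ht₀
    have hroot : α * t₀ + β = 0 := by
      rw [ht₀]; field_simp; ring
    have ht₀mem : a < t₀ ∧ t₀ < b := by
      rcases lt_or_gt_of_ne hαne with hneg | hpos
      · -- α < 0 : from α c + β ≥ 0, c ≤ t₀; from α x + β < 0, t₀ < x
        constructor
        · nlinarith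
        · nlinarith
      · constructor
        · nlinarith
        · nlinarith
    have hcrossmem : t₀ ∈ (S ×ˢ S).image cross := by
      apply Finset.mem_image.mpr
      refine ⟨(σstar, σ), Finset.mem_product.mpr ⟨hσstar, hσ⟩, ?_⟩
      show cross (σstar, σ) = t₀
      unfold cross
      rw [if_neg hslopene, ht₀, hβ, hα, neg_sub]
    exact havoid t₀ hcrossmem ⟨ht₀mem.1, ht₀mem.2⟩
  rw [Phi_eq hS]
  have h1 : S.sup' hS (fun σ => L σ x) = L σstar x := by
    apply le_antisymm
    · exact Finset.sup'_le _ _ key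
    · exact Finset.le_sup' (fun σ => L σ x) hσstar
  rw [h1, L_eq]

end



open Classical in
noncomputable section

/-- `lam` is covered by `S` -/
def Cov (S : Finset Str) (lam : Str) : Prop := ∃ τ ∈ S, τ <+: lam

lemma Smy_refl' (S : Finset Str) : Smy S S := fun σ hσ => ⟨σ, hσ, List.prefix_refl σ⟩

/-- all strings of a given length -/
def allStr : ℕ → Finset Str
  | 0 => {[]}
  | n+1 => (allStr n).biUnion (fun σ => {σ ++ [false], σ ++ [true]})

lemma mem_allStr : ∀ n (σ : Str), σ ∈ allStr n ↔ σ.length = n := by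
  intro n
  induction n with
  | zero =>
      intro σ
      simp [allStr, List.length_eq_zero_iff]
  | succ n ih =>
      intro σ
      simp only [allStr, Finset.mem_biUnion, Finset.mem_insert, Finset.mem_singleton]
      constructor
      · rintro ⟨τ, hτ, h⟩
        have := (ih τ).mp hτ
        rcases h with h | h <;> (rw [h]; simp [this])
      · intro hlen
        have hne : σ ≠ [] := by
          intro h; rw [h] at hlen; simp at hlen
        have hdrop : σ.dropLast ++ [σ.getLast hne] = σ := List.dropLast_append_getLast hne
        refine ⟨σ.dropLast, ?_, ?_⟩
        · rw [ih]
          have := @List.length_dropLast _ σ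
          omega
        · cases hb : σ.getLast hne
          · rw [hb] at hdrop; left; exact hdrop.symm
          · rw [hb] at hdrop; right; exact hdrop.symm

lemma cov_append_bit {F : Finset Str} {n : ℕ} (hlen : ∀ σ ∈ F, σ.length ≤ n)
    {lam : Str} (hlam : lam.length = n) (b : Bool) :
    Cov F (lam ++ [b]) ↔ Cov F lam := by
  constructor
  · rintro ⟨τ, hτ, hpre⟩
    refine ⟨τ, hτ, ?_⟩
    apply List.prefix_of_prefix_length_le hpre (List.prefix_append lam [b])
    rw [hlam]
    exact hlen τ hτ
  · rintro ⟨τ, hτ, hpre⟩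
    exact ⟨τ, hτ, hpre.trans (List.prefix_append lam [b])⟩

variable {P : Type} [PartialOrder P]

/-- the invariant of the inductive construction -/
def Inv (e : ℕ → P) (n : ℕ) (F : ℕ → Finset Str) : Prop :=
  (∀ i < n, (F i).Nonempty) ∧
  (∀ i < n, ∀ σ ∈ F i, σ.length ≤ n) ∧
  (∀ i < n, ∀ j < n, (e i ≤ e j ↔ Smy (F i) (F j))) ∧
  (∀ K : Finset ℕ, (∀ i ∈ K, i < n) →
     (∀ i ∈ K, ∀ j < n, e i ≤ e j → j ∈ K) →
     ∃ lam : Str, lam.length = n ∧ ∀ i < n, (Cov (F i) lam ↔ i ∈ K))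

open Classical in
/-- the set of strings for the new element `e n` -/
noncomputable def extF (e : ℕ → P) (n : ℕ) (F : ℕ → Finset Str) : Finset Str :=
  ((Finset.range n).filter (fun i => e i ≤ e n)).biUnion F
  ∪ ((allStr n).filter (fun lam =>
       (∀ i < n, Cov (F i) lam → ¬ e i ≤ e n) ∧
       (∀ i < n, e n ≤ e i → Cov (F i) lam))).image (fun lam => lam ++ [false])

section Step

variable (e : ℕ → P) (n : ℕ) (F : ℕ → Finset Str)

open Classical

lemma mem_extF_iff (σ : Str) :
    σ ∈ extF e n F ↔
      ((∃ i < n, e i ≤ e n ∧ σ ∈ F i) ∨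
       (∃ lam, lam.length = n ∧
          (∀ i < n, Cov (F i) lam → ¬ e i ≤ e n) ∧
          (∀ i < n, e n ≤ e i → Cov (F i) lam) ∧ σ = lam ++ [false])) := by
  unfold extF
  simp only [Finset.mem_union, Finset.mem_biUnion, Finset.mem_filter, Finset.mem_range,
    Finset.mem_image, mem_allStr]
  constructor
  · rintro (⟨i, ⟨hi, hle⟩, hσ⟩ | ⟨lam, ⟨hlen, h1, h2⟩, heq⟩)
    · exact Or.inl ⟨i, hi, hle, hσ⟩
    · exact Or.inr ⟨lam, hlen, h1, h2, heq.symm⟩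
  · rintro (⟨i, hi, hle, hσ⟩ | ⟨lam, hlen, h1, h2, heq⟩)
    · exact Or.inl ⟨i, ⟨hi, hle⟩, hσ⟩
    · exact Or.inr ⟨lam, ⟨hlen, h1, h2⟩, heq.symm⟩

-- (S1)
lemma smy_into_ext {i : ℕ} (hi : i < n) (hle : e i ≤ e n) :
    Smy (F i) (extF e n F) := by
  intro σ hσ
  refine ⟨σ, ?_, List.prefix_refl σ⟩
  rw [mem_extF_iff]
  exact Or.inl ⟨i, hi, hle, hσ⟩

-- (S2)
lemma smy_ext_into (hInv : Inv e n F) {j : ℕ} (hj : j < n) (hle : e n ≤ e j) :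
    Smy (extF e n F) (F j) := by
  intro σ hσ
  rw [mem_extF_iff] at hσ
  rcases hσ with ⟨l, hl, hlle, hσl⟩ | ⟨lam, hlen, _, h2, rfl⟩
  · have : Smy (F l) (F j) := (hInv.2.2.1 l hl j hj).mp (le_trans hlle hle)
    exact this σ hσl
  · obtain ⟨τ, hτ, hpre⟩ := h2 j hj hle
    exact ⟨τ, hτ, hpre.trans (List.prefix_append lam [false])⟩

-- (S3)
lemma not_smy_ext_into (hInv : Inv e n F) {j : ℕ} (hj : j < n) (hle : ¬ e n ≤ e j) :
    ¬ Smy (extF e n F) (F j) := by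
  intro hsmy
  by_cases hex : ∃ l, l < n ∧ e l ≤ e n ∧ ¬ e l ≤ e j
  · obtain ⟨l, hl, hlle, hlnj⟩ := hex
    have hnot : ¬ Smy (F l) (F j) := fun hs => hlnj ((hInv.2.2.1 l hl j hj).mpr hs)
    unfold Smy at hnot
    push_neg at hnot
    obtain ⟨σ, hσ, hw⟩ := hnot
    have hσext : σ ∈ extF e n F := by
      rw [mem_extF_iff]; exact Or.inl ⟨l, hl, hlle, hσ⟩
    obtain ⟨τ, hτ, hpre⟩ := hsmy σ hσext
    exact hw τ hτ hpre
  · push_neg at hex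
    -- all lowers of z are below e j; use the up-closure of the uppers of z
    set K : Finset ℕ := (Finset.range n).filter (fun i => ∃ u, u < n ∧ e n ≤ e u ∧ e u ≤ e i) with hK
    have hKmem : ∀ i, i ∈ K ↔ (i < n ∧ ∃ u, u < n ∧ e n ≤ e u ∧ e u ≤ e i) := by
      intro i; rw [hK]; simp [Finset.mem_filter, Finset.mem_range]
    have hKbd : ∀ i ∈ K, i < n := fun i hi => ((hKmem i).mp hi).1
    have hKup : ∀ i ∈ K, ∀ j' < n, e i ≤ e j' → j' ∈ K := by
      intro i hi j' hj' hle'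
      obtain ⟨_, u, hu, h1, h2⟩ := (hKmem i).mp hi
      exact (hKmem j').mpr ⟨hj', u, hu, h1, le_trans h2 hle'⟩
    obtain ⟨lam, hlamlen, hlamcov⟩ := hInv.2.2.2 K hKbd hKup
    have hfree1 : ∀ i < n, Cov (F i) lam → ¬ e i ≤ e n := by
      intro i hi hcov hile
      obtain ⟨_, u, hu, h1, h2⟩ := (hKmem i).mp ((hlamcov i hi).mp hcov)
      -- e n ≤ e u ≤ e i and e i ≤ e n and e i ≤ e j (from hex), so e n ≤ e j
      exact hle (le_trans h1 (le_trans h2 (hex i hi hile)))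
    have hfree2 : ∀ i < n, e n ≤ e i → Cov (F i) lam := by
      intro i hi hle'
      exact (hlamcov i hi).mpr ((hKmem i).mpr ⟨hi, i, hi, hle', le_refl _⟩)
    have hσext : lam ++ [false] ∈ extF e n F := by
      rw [mem_extF_iff]
      exact Or.inr ⟨lam, hlamlen, hfree1, hfree2, rfl⟩
    obtain ⟨τ, hτ, hpre⟩ := hsmy (lam ++ [false]) hσext
    have hτlen : τ.length ≤ n := hInv.2.1 j hj τ hτ
    have hτlam : τ <+: lam := by
      apply List.prefix_of_prefix_length_le hpre (List.prefix_append lam [false])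
      rw [hlamlen]; exact hτlen
    have : j ∈ K := (hlamcov j hj).mp ⟨τ, hτ, hτlam⟩
    obtain ⟨_, u, hu, h1, h2⟩ := (hKmem j).mp this
    exact hle (le_trans h1 h2)

-- (S4)
lemma not_smy_into_ext (hInv : Inv e n F) {j : ℕ} (hj : j < n) (hle : ¬ e j ≤ e n) :
    ¬ Smy (F j) (extF e n F) := by
  intro hsmy
  set K : Finset ℕ := (Finset.range n).filter (fun i => e j ≤ e i) with hK
  have hKmem : ∀ i, i ∈ K ↔ (i < n ∧ e j ≤ e i) := by
    intro i; rw [hK]; simp [Finset.mem_filter, Finset.mem_range]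
  have hKbd : ∀ i ∈ K, i < n := fun i hi => ((hKmem i).mp hi).1
  have hKup : ∀ i ∈ K, ∀ j' < n, e i ≤ e j' → j' ∈ K := by
    intro i hi j' hj' hle'
    exact (hKmem j').mpr ⟨hj', le_trans ((hKmem i).mp hi).2 hle'⟩
  obtain ⟨lam, hlamlen, hlamcov⟩ := hInv.2.2.2 K hKbd hKup
  have hjK : j ∈ K := (hKmem j).mpr ⟨hj, le_refl _⟩
  obtain ⟨σstar, hσstar, hσpre⟩ := (hlamcov j hj).mpr hjK
  obtain ⟨τ, hτ, hpre⟩ := hsmy σstar hσstar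
  rw [mem_extF_iff] at hτ
  rcases hτ with ⟨l, hl, hlle, hτl⟩ | ⟨mu, hmulen, _, _, rfl⟩
  · have : Cov (F l) lam := ⟨τ, hτl, hpre.trans hσpre⟩
    have : l ∈ K := (hlamcov l hl).mp this
    exact hle (le_trans ((hKmem l).mp this).2 hlle)
  · have h1 : (mu ++ [false]).length ≤ σstar.length := hpre.length_le
    have h2 : σstar.length ≤ n := hInv.2.1 j hj σstar hσstar
    rw [List.length_append, hmulen] at h1
    simp at h1
    omega

lemma extF_nonempty (hInv : Inv e n F) : (extF e n F).Nonempty := by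
  by_cases hex : ∃ l, l < n ∧ e l ≤ e n
  · obtain ⟨l, hl, hle⟩ := hex
    obtain ⟨σ, hσ⟩ := hInv.1 l hl
    exact ⟨σ, by rw [mem_extF_iff]; exact Or.inl ⟨l, hl, hle, hσ⟩⟩
  · push_neg at hex
    set K : Finset ℕ := (Finset.range n).filter (fun i => ∃ u, u < n ∧ e n ≤ e u ∧ e u ≤ e i) with hK
    have hKmem : ∀ i, i ∈ K ↔ (i < n ∧ ∃ u, u < n ∧ e n ≤ e u ∧ e u ≤ e i) := by
      intro i; rw [hK]; simp [Finset.mem_filter, Finset.mem_range]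
    have hKbd : ∀ i ∈ K, i < n := fun i hi => ((hKmem i).mp hi).1
    have hKup : ∀ i ∈ K, ∀ j' < n, e i ≤ e j' → j' ∈ K := by
      intro i hi j' hj' hle'
      obtain ⟨_, u, hu, h1, h2⟩ := (hKmem i).mp hi
      exact (hKmem j').mpr ⟨hj', u, hu, h1, le_trans h2 hle'⟩
    obtain ⟨lam, hlamlen, hlamcov⟩ := hInv.2.2.2 K hKbd hKup
    refine ⟨lam ++ [false], ?_⟩
    rw [mem_extF_iff]
    refine Or.inr ⟨lam, hlamlen, ?_, ?_, rfl⟩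
    · intro i hi _ hile
      exact (hex i hi) hile
    · intro i hi hle'
      exact (hlamcov i hi).mpr ((hKmem i).mpr ⟨hi, i, hi, hle', le_refl _⟩)

theorem invStep (hInv : Inv e n F) :
    Inv e (n+1) (Function.update F n (extF e n F)) := by
  have hupd_lt : ∀ i < n, Function.update F n (extF e n F) i = F i := by
    intro i hi
    exact Function.update_of_ne (Nat.ne_of_lt hi) _ _
  have hupd_n : Function.update F n (extF e n F) n = extF e n F :=
    Function.update_self _ _ _
  refine ⟨?_, ?_, ?_, ?_⟩
  · -- nonempty
    intro i hi
    rcases Nat.lt_succ_iff_lt_or_eq.mp hi with h | heq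
    · rw [hupd_lt i h]; exact hInv.1 i h
    · subst i; rw [hupd_n]; exact extF_nonempty e n F hInv
  · -- lengths
    intro i hi σ hσ
    rcases Nat.lt_succ_iff_lt_or_eq.mp hi with h | heq
    · rw [hupd_lt i h] at hσ
      exact le_trans (hInv.2.1 i h σ hσ) (Nat.le_succ n)
    · subst i
      rw [hupd_n, mem_extF_iff] at hσ
      rcases hσ with ⟨l, hl, _, hσl⟩ | ⟨lam, hlen, _, _, rfl⟩
      · exact le_trans (hInv.2.1 l hl σ hσl) (Nat.le_succ n)
      · rw [List.length_append, hlen]; simp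
  · -- order characterization
    intro i hi j hj
    rcases Nat.lt_succ_iff_lt_or_eq.mp hi with h | heqi
    · rcases Nat.lt_succ_iff_lt_or_eq.mp hj with h' | heqj
      · rw [hupd_lt i h, hupd_lt j h']
        exact hInv.2.2.1 i h j h'
      · subst j
        rw [hupd_lt i h, hupd_n]
        constructor
        · intro hle; exact smy_into_ext e n F h hle
        · intro hsmy
          by_contra hle
          exact not_smy_into_ext e n F hInv h hle hsmy
    · subst i
      rcases Nat.lt_succ_iff_lt_or_eq.mp hj with h' | heqj
      · rw [hupd_lt j h', hupd_n]
        constructor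
        · intro hle; exact smy_ext_into e n F hInv h' hle
        · intro hsmy
          by_contra hle
          exact not_smy_ext_into e n F hInv h' hle hsmy
      · subst j
        constructor
        · intro _; exact Smy_refl' _
        · intro _; exact le_refl _
  · -- realization of up-sets
    intro K' hK'bd hK'up
    have hKbd : ∀ i ∈ K'.erase n, i < n := by
      intro i hi
      have h1 := Finset.mem_of_mem_erase hi
      have h2 := Finset.ne_of_mem_erase hi
      have := hK'bd i h1
      omega
    have hKup : ∀ i ∈ K'.erase n, ∀ j < n, e i ≤ e j → j ∈ K'.erase n := by
      intro i hi j hj hle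
      have h1 := Finset.mem_of_mem_erase hi
      have hjK' : j ∈ K' := hK'up i h1 j (by omega) hle
      exact Finset.mem_erase.mpr ⟨Nat.ne_of_lt hj, hjK'⟩
    obtain ⟨lam, hlamlen, hlamcov⟩ := hInv.2.2.2 (K'.erase n) hKbd hKup
    have hcov_bit : ∀ i < n, ∀ b, (Cov (F i) (lam ++ [b]) ↔ Cov (F i) lam) := by
      intro i hi b
      exact cov_append_bit (hInv.2.1 i hi) hlamlen b
    have herase_iff : ∀ i < n, (i ∈ K'.erase n ↔ i ∈ K') := by
      intro i hi
      rw [Finset.mem_erase]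
      constructor
      · exact fun h => h.2
      · exact fun h => ⟨Nat.ne_of_lt hi, h⟩
    by_cases hzin : n ∈ K'
    · by_cases hlow : ∃ l ∈ K'.erase n, e l ≤ e n
      · -- use lam ++ [true]; z covers via inherited strings
        obtain ⟨l, hlK, hlle⟩ := hlow
        have hl : l < n := hKbd l hlK
        refine ⟨lam ++ [true], by simp [hlamlen], ?_⟩
        intro i hi
        rcases Nat.lt_succ_iff_lt_or_eq.mp hi with h | heq
        · rw [hupd_lt i h, hcov_bit i h true, hlamcov i h, herase_iff i h]
        · subst i
          rw [hupd_n]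
          simp only [hzin, iff_true]
          obtain ⟨τ, hτ, hpre⟩ := (hlamcov l hl).mpr hlK
          refine ⟨τ, ?_, hpre.trans (List.prefix_append lam [true])⟩
          rw [mem_extF_iff]
          exact Or.inl ⟨l, hl, hlle, hτ⟩
      · -- free cell: use lam ++ [false]
        push_neg at hlow
        have hfree1 : ∀ i < n, Cov (F i) lam → ¬ e i ≤ e n := by
          intro i hi hcov
          exact hlow i ((hlamcov i hi).mp hcov)
        have hfree2 : ∀ i < n, e n ≤ e i → Cov (F i) lam := by
          intro i hi hle
          have hiK' : i ∈ K' := hK'up n hzin i (by omega) hle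
          exact (hlamcov i hi).mpr ((herase_iff i hi).mpr hiK')
        refine ⟨lam ++ [false], by simp [hlamlen], ?_⟩
        intro i hi
        rcases Nat.lt_succ_iff_lt_or_eq.mp hi with h | heq
        · rw [hupd_lt i h, hcov_bit i h false, hlamcov i h, herase_iff i h]
        · subst i
          rw [hupd_n]
          simp only [hzin, iff_true]
          refine ⟨lam ++ [false], ?_, List.prefix_refl _⟩
          rw [mem_extF_iff]
          exact Or.inr ⟨lam, hlamlen, hfree1, hfree2, rfl⟩
    · -- n ∉ K' : use lam ++ [true], z must not cover
      have hKlow : ∀ l ∈ K'.erase n, ¬ e l ≤ e n := by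
        intro l hl hle
        have h1 := Finset.mem_of_mem_erase hl
        exact hzin (hK'up l h1 n (Nat.lt_succ_self n) hle)
      refine ⟨lam ++ [true], by simp [hlamlen], ?_⟩
      intro i hi
      rcases Nat.lt_succ_iff_lt_or_eq.mp hi with h | heq
      · rw [hupd_lt i h, hcov_bit i h true, hlamcov i h, herase_iff i h]
      · subst i
        rw [hupd_n]
        simp only [hzin, iff_false]
        rintro ⟨τ, hτ, hpre⟩
        rw [mem_extF_iff] at hτ
        rcases hτ with ⟨l, hl, hlle, hτl⟩ | ⟨mu, hmulen, _, _, rfl⟩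
        · have hτlen : τ.length ≤ n := hInv.2.1 l hl τ hτl
          have hτlam : τ <+: lam := by
            apply List.prefix_of_prefix_length_le hpre (List.prefix_append lam [true])
            rw [hlamlen]; exact hτlen
          have hlK : l ∈ K'.erase n := (hlamcov l hl).mp ⟨τ, hτl, hτlam⟩
          exact hKlow l hlK hlle
        · -- mu ++ [false] is a prefix of lam ++ [true] of equal length: impossible
          have hlen1 : (mu ++ [false]).length = (lam ++ [true]).length := by
            simp [hmulen, hlamlen]
          have heq : mu ++ [false] = lam ++ [true] := hpre.eq_of_length hlen1
          have : (false : Bool) = true := by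
            have h1 := congrArg (fun l : Str => l.getLast?) heq
            simpa using h1
          exact Bool.noConfusion this

end Step

lemma inv_zero (e : ℕ → P) : Inv e 0 (fun _ => (∅ : Finset Str)) := by
  refine ⟨?_, ?_, ?_, ?_⟩
  · intro i hi; omega
  · intro i hi; omega
  · intro i hi; omega
  · intro K _ _
    exact ⟨[], rfl, fun i hi => by omega⟩

noncomputable def chain (e : ℕ → P) : ∀ n : ℕ, {F : ℕ → Finset Str // Inv e n F}
  | 0 => ⟨fun _ => (∅ : Finset Str), inv_zero e⟩
  | n+1 => ⟨Function.update (chain e n).1 n (extF e n (chain e n).1),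
      invStep e n (chain e n).1 (chain e n).2⟩

lemma chain_stable (e : ℕ → P) : ∀ n i, i < n → (chain e n).1 i = (chain e (i+1)).1 i := by
  intro n
  induction n with
  | zero => intro i hi; omega
  | succ n ih =>
      intro i hi
      rcases Nat.lt_succ_iff_lt_or_eq.mp hi with h | heq
      · have : (chain e (n+1)).1 i = (chain e n).1 i := by
          show (Function.update (chain e n).1 n (extF e n (chain e n).1)) i = _
          exact Function.update_of_ne (Nat.ne_of_lt h) _ _
        rw [this, ih i h]
      · subst i; rfl

/-- Theorem A: codes for a countable partial order -/
theorem exists_codes (e : ℕ → P) :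
    ∃ G : ℕ → Finset Str, (∀ i, (G i).Nonempty) ∧
      (∀ i j, e i ≤ e j ↔ Smy (G i) (G j)) := by
  refine ⟨fun i => (chain e (i+1)).1 i, ?_, ?_⟩
  · intro i
    exact (chain e (i+1)).2.1 i (Nat.lt_succ_self i)
  · intro i j
    set N := max i j + 1 with hN
    have hi : i < N := by omega
    have hj : j < N := by omega
    have h1 := (chain e N).2.2.2.1 i hi j hj
    rw [chain_stable e N i hi, chain_stable e N j hj] at h1
    exact h1

end


end PWLU

/-- `f : ℚ → ℚ` is piecewise linear on `(0,1)` with finitely many rational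
breakpoints: away from a finite set of breakpoints it is given by linear pieces. -/
def IsPWL (f : ℚ → ℚ) : Prop :=
  ∃ s : Finset ℚ, ∀ a b : ℚ, 0 ≤ a → b ≤ 1 → a < b →
    (∀ c ∈ s, ¬ (a < c ∧ c < b)) →
    ∃ m q : ℚ, ∀ x : ℚ, a < x → x < b → f x = m * x + q

/-- The pointwise order on convex piecewise linear functions on `(0,1) ∩ ℚ`
is universal: every countable partial order embeds into it. -/
theorem pwl_order_universal (P : Type) [PartialOrder P] [Countable P] :
    ∃ φ : P → ℚ → ℚ,
      (∀ x, IsPWL (φ x) ∧ ConvexOn ℚ (Set.Ioo (0 : ℚ) 1) (φ x)) ∧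
      (∀ x y, x ≤ y ↔ ∀ t ∈ Set.Ioo (0 : ℚ) 1, φ x t ≤ φ y t) := by
  rcases isEmpty_or_nonempty P with hP | hP
  · refine ⟨fun x => (IsEmpty.false x).elim, ?_, ?_⟩
    · intro x; exact (IsEmpty.false x).elim
    · intro x; exact (IsEmpty.false x).elim
  · obtain ⟨e, hesurj⟩ := exists_surjective_nat P
    obtain ⟨G, hne, hord⟩ := PWLU.exists_codes e
    classical
    choose idx hidx using hesurj
    refine ⟨fun x => PWLU.Phi (G (idx x)), ?_, ?_⟩
    · intro x
      constructor
      · exact PWLU.isPWL_Phi (hne (idx x))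
      · exact PWLU.convexOn_Phi (hne (idx x))
    · intro x y
      have hxy : (x ≤ y) ↔ (e (idx x) ≤ e (idx y)) := by rw [hidx x, hidx y]
      rw [hxy, hord (idx x) (idx y)]
      constructor
      · intro hsmy t ht
        exact PWLU.Phi_mono (hne (idx x)) (hne (idx y)) hsmy ht
      · intro hall
        by_contra hnsmy
        obtain ⟨t, ht, hlt⟩ := PWLU.Phi_strict (hne (idx x)) (hne (idx y)) hnsmy
        exact absurd (hall t ht) (not_le.mpr hlt)
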